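/- For integers m_1 ≥ m_2 ≥ 0 one has C(m_1,m_2) = (m_2(m_1+3)(m_1+8)(m_2+5))/(4(m_1+5)(m_1+6)(m_2+2)(m_2+3)); in particular C(m_1,m_2) = 0 if and only if m_2 = 0. -/

import Mathlib

open Finset

/-- A tuple of integers is dominant if its entries are weakly decreasing and nonnegative. -/
def Dominant {r : ℕ} (m : Fin r → ℤ) : Prop :=
  (∀ j k : Fin r, j ≤ k → m k ≤ m j) ∧ ∀ j : Fin r, 0 ≤ m j

instance {r : ℕ} (m : Fin r → ℤ) : Decidable (Dominant m) := by
  unfold Dominant; infer_instance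

/-- The genus `p = (e+1) + (r-1)d + b/2`. -/
noncomputable def genusP (r : ℕ) (b d e : ℝ) : ℝ := (e + 1) + ((r : ℝ) - 1) * d + b / 2

/-- `n = r(p + b/2)`. -/
noncomputable def dimN (r : ℕ) (b d e : ℝ) : ℝ := r * (genusP r b d e + b / 2)

/-- `ρ_k = (r-k)d/2 + e/2 + b/4` (1-indexed `k`). -/
noncomputable def rho (r : ℕ) (b d e : ℝ) (k : Fin r) : ℝ :=
  ((r : ℝ) - ((k : ℕ) + 1)) * d / 2 + e / 2 + b / 4

/-- The coefficient `A(m,k)`. -/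
noncomputable def Acoef (r : ℕ) (b d e : ℝ) (m : Fin r → ℤ) (k : Fin r) : ℝ :=
  (genusP r b d e / (2 * dimN r b d e)) *
    ((2 * ((m k : ℝ) + rho r b d e k) + b / 2 + 1) *
        (2 * ((m k : ℝ) + rho r b d e k) + b / 2 + e)) /
      ((2 * ((m k : ℝ) + rho r b d e k)) * (2 * ((m k : ℝ) + rho r b d e k) + 1)) *
    ∏ j ∈ univ.erase k,
      ((((m k : ℝ) + rho r b d e k) - ((m j : ℝ) + rho r b d e j) + d / 2) *
          (((m k : ℝ) + rho r b d e k) + ((m j : ℝ) + rho r b d e j) + d / 2)) /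
        ((((m k : ℝ) + rho r b d e k) - ((m j : ℝ) + rho r b d e j)) *
          (((m k : ℝ) + rho r b d e k) + ((m j : ℝ) + rho r b d e j)))

/-- The coefficient `B(m,k)`. -/
noncomputable def Bcoef (r : ℕ) (b d e : ℝ) (m : Fin r → ℤ) (k : Fin r) : ℝ :=
  (genusP r b d e / (2 * dimN r b d e)) *
    ((2 * ((m k : ℝ) + rho r b d e k) - b / 2 - 1) *
        (2 * ((m k : ℝ) + rho r b d e k) - b / 2 - e)) /
      ((2 * ((m k : ℝ) + rho r b d e k)) * (2 * ((m k : ℝ) + rho r b d e k) - 1)) *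
    ∏ j ∈ univ.erase k,
      ((((m k : ℝ) + rho r b d e k) + ((m j : ℝ) + rho r b d e j) - d / 2) *
          (((m k : ℝ) + rho r b d e k) - ((m j : ℝ) + rho r b d e j) - d / 2)) /
        ((((m k : ℝ) + rho r b d e k) + ((m j : ℝ) + rho r b d e j)) *
          (((m k : ℝ) + rho r b d e k) - ((m j : ℝ) + rho r b d e j)))

/-- The coefficient `C(m)`. -/
noncomputable def Ccoef (r : ℕ) (b d e : ℝ) (m : Fin r → ℤ) : ℝ :=
  1 - (∑ k ∈ univ.filter (fun k : Fin r =>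
        Dominant (fun j => m j + if j = k then 1 else 0)), Acoef r b d e m k)
    - (∑ k ∈ univ.filter (fun k : Fin r =>
        Dominant (fun j => m j - if j = k then 1 else 0)), Bcoef r b d e m k)

set_option maxHeartbeats 2000000 in
lemma Cm_e6_aux (x y : ℝ) (hy : 0 ≤ y) (hxy : y ≤ x) :
    1 - (3 / 16 * ((2 * (x + 11 / 2) + 4 + 1) * (2 * (x + 11 / 2) + 4 + 1)) /
              (2 * (x + 11 / 2) * (2 * (x + 11 / 2) + 1)) *
            ((x + 11 / 2 - (y + 5 / 2) + 3) * (x + 11 / 2 + (y + 5 / 2) + 3) /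
              ((x + 11 / 2 - (y + 5 / 2)) * (x + 11 / 2 + (y + 5 / 2)))) +
          3 / 16 * ((2 * (y + 5 / 2) + 4 + 1) * (2 * (y + 5 / 2) + 4 + 1)) /
              (2 * (y + 5 / 2) * (2 * (y + 5 / 2) + 1)) *
            ((y + 5 / 2 - (x + 11 / 2) + 3) * (y + 5 / 2 + (x + 11 / 2) + 3) /
              ((y + 5 / 2 - (x + 11 / 2)) * (y + 5 / 2 + (x + 11 / 2))))) -
      (3 / 16 * ((2 * (x + 11 / 2) - 4 - 1) * (2 * (x + 11 / 2) - 4 - 1)) /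
            (2 * (x + 11 / 2) * (2 * (x + 11 / 2) - 1)) *
          ((x + 11 / 2 + (y + 5 / 2) - 3) * (x + 11 / 2 - (y + 5 / 2) - 3) /
            ((x + 11 / 2 + (y + 5 / 2)) * (x + 11 / 2 - (y + 5 / 2)))) +
        3 / 16 * ((2 * (y + 5 / 2) - 4 - 1) * (2 * (y + 5 / 2) - 4 - 1)) /
            (2 * (y + 5 / 2) * (2 * (y + 5 / 2) - 1)) *
          ((y + 5 / 2 + (x + 11 / 2) - 3) * (y + 5 / 2 - (x + 11 / 2) - 3) /
            ((y + 5 / 2 + (x + 11 / 2)) * (y + 5 / 2 - (x + 11 / 2))))) =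
    y * (x + 3) * (x + 8) * (y + 5) / (4 * (x + 5) * (x + 6) * (y + 2) * (y + 3)) := by
  have hx : 0 ≤ x := le_trans hy hxy
  have hD : (0:ℝ) < (2*x+10)*(2*x+11)*(2*x+12)*(2*y+4)*(2*y+5)*(2*y+6)*(x-y+3)*(x+y+8) := by
    refine mul_pos (mul_pos (mul_pos (mul_pos (mul_pos (mul_pos (mul_pos ?_ ?_) ?_) ?_) ?_) ?_) ?_) ?_ <;> linarith
  have h0 : 3 / 16 * ((2 * (x + 11 / 2) + 4 + 1) * (2 * (x + 11 / 2) + 4 + 1)) /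
              (2 * (x + 11 / 2) * (2 * (x + 11 / 2) + 1)) *
            ((x + 11 / 2 - (y + 5 / 2) + 3) * (x + 11 / 2 + (y + 5 / 2) + 3) /
              ((x + 11 / 2 - (y + 5 / 2)) * (x + 11 / 2 + (y + 5 / 2))))
      = 3/16*(2*x+16)*(2*x+16)*(x-y+6)*(x+y+11)*(2*x+10)*(2*y+4)*(2*y+5)*(2*y+6) /
          ((2*x+10)*(2*x+11)*(2*x+12)*(2*y+4)*(2*y+5)*(2*y+6)*(x-y+3)*(x+y+8)) := by
    rw [div_mul_div_comm, div_eq_div_iff (by refine ne_of_gt (mul_pos (mul_pos ?_ ?_) (mul_pos ?_ ?_)) <;> linarith) hD.ne']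
    ring
  have h1 : 3 / 16 * ((2 * (y + 5 / 2) + 4 + 1) * (2 * (y + 5 / 2) + 4 + 1)) /
              (2 * (y + 5 / 2) * (2 * (y + 5 / 2) + 1)) *
            ((y + 5 / 2 - (x + 11 / 2) + 3) * (y + 5 / 2 + (x + 11 / 2) + 3) /
              ((y + 5 / 2 - (x + 11 / 2)) * (y + 5 / 2 + (x + 11 / 2))))
      = -(3/16*(2*y+10)*(2*y+10)*(y-x)*(x+y+11)*(2*y+4)*(2*x+10)*(2*x+11)*(2*x+12)) /
          ((2*x+10)*(2*x+11)*(2*x+12)*(2*y+4)*(2*y+5)*(2*y+6)*(x-y+3)*(x+y+8)) := by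
    rw [div_mul_div_comm, div_eq_div_iff (by refine ne_of_lt (mul_neg_of_pos_of_neg (mul_pos ?_ ?_) (mul_neg_of_neg_of_pos ?_ ?_)) <;> linarith) hD.ne']
    ring
  have h2 : 3 / 16 * ((2 * (x + 11 / 2) - 4 - 1) * (2 * (x + 11 / 2) - 4 - 1)) /
            (2 * (x + 11 / 2) * (2 * (x + 11 / 2) - 1)) *
          ((x + 11 / 2 + (y + 5 / 2) - 3) * (x + 11 / 2 - (y + 5 / 2) - 3) /
            ((x + 11 / 2 + (y + 5 / 2)) * (x + 11 / 2 - (y + 5 / 2))))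
      = 3/16*(2*x+6)*(2*x+6)*(x+y+5)*(x-y)*(2*x+12)*(2*y+4)*(2*y+5)*(2*y+6) /
          ((2*x+10)*(2*x+11)*(2*x+12)*(2*y+4)*(2*y+5)*(2*y+6)*(x-y+3)*(x+y+8)) := by
    rw [div_mul_div_comm, div_eq_div_iff (by refine ne_of_gt (mul_pos (mul_pos ?_ ?_) (mul_pos ?_ ?_)) <;> linarith) hD.ne']
    ring
  have h3 : 3 / 16 * ((2 * (y + 5 / 2) - 4 - 1) * (2 * (y + 5 / 2) - 4 - 1)) /
            (2 * (y + 5 / 2) * (2 * (y + 5 / 2) - 1)) *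
          ((y + 5 / 2 + (x + 11 / 2) - 3) * (y + 5 / 2 - (x + 11 / 2) - 3) /
            ((y + 5 / 2 + (x + 11 / 2)) * (y + 5 / 2 - (x + 11 / 2))))
      = -(3/16*(2*y)*(2*y)*(x+y+5)*(y-x-6)*(2*y+6)*(2*x+10)*(2*x+11)*(2*x+12)) /
          ((2*x+10)*(2*x+11)*(2*x+12)*(2*y+4)*(2*y+5)*(2*y+6)*(x-y+3)*(x+y+8)) := by
    rw [div_mul_div_comm, div_eq_div_iff (by refine ne_of_lt (mul_neg_of_pos_of_neg (mul_pos ?_ ?_) (mul_neg_of_pos_of_neg ?_ ?_)) <;> linarith) hD.ne']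
    ring
  rw [h0, h1, h2, h3, ← add_div, ← add_div]
  rw [show (1:ℝ) = ((2*x+10)*(2*x+11)*(2*x+12)*(2*y+4)*(2*y+5)*(2*y+6)*(x-y+3)*(x+y+8)) /
      ((2*x+10)*(2*x+11)*(2*x+12)*(2*y+4)*(2*y+5)*(2*y+6)*(x-y+3)*(x+y+8)) from (div_self hD.ne').symm,
    div_sub_div_same, div_sub_div_same]
  rw [div_eq_div_iff hD.ne' (by refine ne_of_gt (mul_pos (mul_pos (mul_pos (mul_pos ?_ ?_) ?_) ?_) ?_) <;> linarith)]
  ring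

set_option maxHeartbeats 2000000 in
theorem Cm_e6_complex (m : Fin 2 → ℤ) (hm : Dominant m) :
    Ccoef 2 8 6 1 m
        = (m 1 : ℝ) * ((m 0 : ℝ) + 3) * ((m 0 : ℝ) + 8) * ((m 1 : ℝ) + 5) /
          (4 * ((m 0 : ℝ) + 5) * ((m 0 : ℝ) + 6) * ((m 1 : ℝ) + 2) * ((m 1 : ℝ) + 3)) ∧
      (Ccoef 2 8 6 1 m = 0 ↔ m 1 = 0) := by
  obtain ⟨hmono, hpos⟩ := hm
  have hxy : m 1 ≤ m 0 := hmono 0 1 (by decide)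
  have hy : (0:ℤ) ≤ m 1 := hpos 1
  have e0 : (univ.erase (0 : Fin 2)) = {1} := by decide
  have e1 : (univ.erase (1 : Fin 2)) = {0} := by decide
  have dA0 : Dominant (fun j : Fin 2 => m j + if j = 0 then 1 else 0) := by
    simp only [Dominant, Fin.forall_fin_two, Fin.le_def]
    norm_num
    omega
  have dA1 : Dominant (fun j : Fin 2 => m j + if j = 1 then 1 else 0) ↔ m 1 < m 0 := by
    simp only [Dominant, Fin.forall_fin_two, Fin.le_def]
    norm_num
    omega
  have dB0 : Dominant (fun j : Fin 2 => m j - if j = 0 then 1 else 0) ↔ m 1 < m 0 := by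
    simp only [Dominant, Fin.forall_fin_two, Fin.le_def]
    norm_num
    omega
  have dB1 : Dominant (fun j : Fin 2 => m j - if j = 1 then 1 else 0) ↔ 1 ≤ m 1 := by
    simp only [Dominant, Fin.forall_fin_two, Fin.le_def]
    norm_num
    omega
  have hXY : ((m 1 : ℝ)) ≤ (m 0 : ℝ) := by exact_mod_cast hxy
  have hY : (0:ℝ) ≤ (m 1 : ℝ) := by exact_mod_cast hy
  suffices key : Ccoef 2 8 6 1 m
      = (m 1 : ℝ) * ((m 0 : ℝ) + 3) * ((m 0 : ℝ) + 8) * ((m 1 : ℝ) + 5) /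
          (4 * ((m 0 : ℝ) + 5) * ((m 0 : ℝ) + 6) * ((m 1 : ℝ) + 2) * ((m 1 : ℝ) + 3)) by
    refine ⟨key, ?_⟩
    rw [key, div_eq_zero_iff]
    constructor
    · rintro (h | h)
      · have h3 : ((m 1:ℝ)) = 0 ∨ ((m 0:ℝ) + 3) = 0 ∨ ((m 0:ℝ) + 8) = 0 ∨ ((m 1:ℝ) + 5) = 0 := by
          rcases mul_eq_zero.mp h with h' | h'
          · rcases mul_eq_zero.mp h' with h'' | h''
            · rcases mul_eq_zero.mp h'' with h''' | h'''
              · exact Or.inl h'''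
              · exact Or.inr (Or.inl h''')
            · exact Or.inr (Or.inr (Or.inl h''))
          · exact Or.inr (Or.inr (Or.inr h'))
        have hX0 : (0:ℝ) ≤ (m 0 : ℝ) := le_trans hY hXY
        rcases h3 with h' | h' | h' | h'
        · exact_mod_cast h'
        · linarith
        · linarith
        · linarith
      · exfalso
        have hX0 : (0:ℝ) ≤ (m 0 : ℝ) := le_trans hY hXY
        have : (0:ℝ) < 4 * ((m 0:ℝ) + 5) * ((m 0:ℝ) + 6) * ((m 1:ℝ) + 2) * ((m 1:ℝ) + 3) := by
          refine mul_pos (mul_pos (mul_pos (mul_pos ?_ ?_) ?_) ?_) ?_ <;> linarith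
        exact this.ne' h
    · intro h
      have : ((m 1 : ℤ):ℝ) = 0 := by exact_mod_cast h
      rw [this]
      simp
  have main : 1 - (Acoef 2 8 6 1 m 0 + Acoef 2 8 6 1 m 1)
      - (Bcoef 2 8 6 1 m 0 + Bcoef 2 8 6 1 m 1)
      = (m 1 : ℝ) * ((m 0 : ℝ) + 3) * ((m 0 : ℝ) + 8) * ((m 1 : ℝ) + 5) /
          (4 * ((m 0 : ℝ) + 5) * ((m 0 : ℝ) + 6) * ((m 1 : ℝ) + 2) * ((m 1 : ℝ) + 3)) := by
    simp only [Acoef, Bcoef, rho, genusP, dimN, e0, e1, Finset.prod_singleton]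
    norm_num
    exact Cm_e6_aux ((m 0 : ℝ)) ((m 1 : ℝ)) hY hXY
  rw [Ccoef, Finset.sum_filter, Finset.sum_filter, Fin.sum_univ_two, Fin.sum_univ_two,
    if_pos dA0]
  simp only [dA1, dB0, dB1]
  rcases lt_or_eq_of_le hxy with hlt | heq
  · rw [if_pos hlt, if_pos hlt]
    rcases lt_or_eq_of_le hy with h1 | h0
    · rw [if_pos (by omega : (1:ℤ) ≤ m 1)]
      exact main
    · rw [if_neg (by omega : ¬ (1:ℤ) ≤ m 1), add_zero]
      have hB1 : Bcoef 2 8 6 1 m 1 = 0 := by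
        simp only [Bcoef, rho, genusP, dimN, e1, Finset.prod_singleton, ← h0]
        norm_num
      rw [hB1, add_zero] at main
      exact main
  · rw [if_neg (by omega : ¬ m 1 < m 0), if_neg (by omega : ¬ m 1 < m 0), add_zero, zero_add]
    have hA1 : Acoef 2 8 6 1 m 1 = 0 := by
      simp only [Acoef, rho, genusP, dimN, e1, Finset.prod_singleton, heq]
      norm_num
    have hB0 : Bcoef 2 8 6 1 m 0 = 0 := by
      simp only [Bcoef, rho, genusP, dimN, e0, Finset.prod_singleton, heq]
      norm_num
    rw [hA1, hB0, add_zero, zero_add] at main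
    rcases lt_or_eq_of_le hy with h1 | h0
    · rw [if_pos (by omega : (1:ℤ) ≤ m 1)]
      exact main
    · rw [if_neg (by omega : ¬ (1:ℤ) ≤ m 1)]
      have hB1 : Bcoef 2 8 6 1 m 1 = 0 := by
        simp only [Bcoef, rho, genusP, dimN, e1, Finset.prod_singleton, ← h0]
        norm_num
      rw [hB1] at main
      simpa using main
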